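/- For every real x > 0 and every r with 1 < r ≤ 2, the inequality |log x − x + 1| ≤ |x − 1|^r · max(−log x, 1) holds. -/

import Mathlib

open Real Set

private lemma exp_neg_one_lt : Real.exp (-1) < 0.37 := by
  rw [Real.exp_neg]
  rw [inv_lt_comm₀ (Real.exp_pos 1) (by norm_num)]
  have := Real.exp_one_gt_d9
  linarith

private lemma exp_neg_one_gt : 0.36 < Real.exp (-1) := by
  rw [Real.exp_neg]
  rw [lt_inv_comm₀ (by norm_num) (Real.exp_pos 1)]
  have := Real.exp_one_lt_d9
  linarith

private lemma const_pos : 0 < 1 - 3 * Real.exp (-1) + Real.exp (-1) ^ 2 := by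
  have h1 := exp_neg_one_lt
  have h2 := exp_neg_one_gt
  nlinarith

private lemma hderivB (x : ℝ) (hx : 0 < x) :
    HasDerivAt (fun y => (1 - y) * (2 - y) + Real.log y) (2 * x - 3 + x⁻¹) x := by
  have h1 : HasDerivAt (fun y : ℝ => (1 - y) * (2 - y)) ((-1) * (2 - x) + (1 - x) * (-1)) x :=
    (((hasDerivAt_id x).const_sub 1)).mul ((hasDerivAt_id x).const_sub 2)
  have h2 := (Real.hasDerivAt_log hx.ne').const_add 0
  have := h1.add (Real.hasDerivAt_log hx.ne')
  exact this.congr_deriv (by ring)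

private lemma lemB {x : ℝ} (hx : Real.exp (-1) ≤ x) (hx1 : x ≤ 1) :
    0 ≤ (1 - x) * (2 - x) + Real.log x := by
  set f : ℝ → ℝ := fun y => (1 - y) * (2 - y) + Real.log y with hf
  have hcont : ∀ a : ℝ, 0 < a → ContinuousOn f (Icc a 1) := by
    intro a ha
    apply ContinuousOn.add (by fun_prop)
    exact Real.continuousOn_log.mono (fun y hy => by
      simp only [mem_compl_iff, mem_singleton_iff]
      exact (lt_of_lt_of_le ha hy.1).ne')
  have hdiff : ∀ a : ℝ, 0 < a → DifferentiableOn ℝ f (interior (Icc a 1)) := by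
    intro a ha y hy
    rw [interior_Icc] at hy
    exact (hderivB y (ha.trans hy.1)).differentiableAt.differentiableWithinAt
  have hE : (0:ℝ) < Real.exp (-1) := Real.exp_pos _
  rcases le_total x (1/2) with hhalf | hhalf
  · -- f monotone on [exp(-1), 1/2], value at exp(-1) nonneg
    have hmono : MonotoneOn f (Icc (Real.exp (-1)) (1/2)) := by
      apply monotoneOn_of_deriv_nonneg (convex_Icc _ _)
      · exact (hcont _ hE).mono (Icc_subset_Icc le_rfl (by norm_num))
      · intro y hy
        rw [interior_Icc] at hy
        exact (hderivB y (hE.trans hy.1)).differentiableAt.differentiableWithinAt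
      · intro y hy
        rw [interior_Icc] at hy
        rw [(hderivB y (hE.trans hy.1)).deriv]
        have hy0 : 0 < y := hE.trans hy.1
        have h1 : (2*y - 3 + y⁻¹) * y = (2*y - 1) * (y - 1) := by
          field_simp; ring
        have h36 := exp_neg_one_gt
        nlinarith [hy.1, hy.2, inv_pos.mpr hy0]
    have hfE : 0 ≤ f (Real.exp (-1)) := by
      have : Real.log (Real.exp (-1)) = -1 := Real.log_exp _
      simp only [hf, this]
      nlinarith [const_pos]
    have := hmono ⟨le_rfl, (hx.trans hhalf)⟩ ⟨hx, hhalf⟩ hx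
    simp only [hf] at this hfE
    linarith
  · -- f antitone on [1/2, 1], value at 1 is 0
    have hanti : AntitoneOn f (Icc (1/2 : ℝ) 1) := by
      apply antitoneOn_of_deriv_nonpos (convex_Icc _ _)
      · exact hcont _ (by norm_num)
      · exact hdiff _ (by norm_num)
      · intro y hy
        rw [interior_Icc] at hy
        have hy0 : (0:ℝ) < y := by linarith [hy.1]
        rw [(hderivB y hy0).deriv]
        have h1 : (2*y - 3 + y⁻¹) * y = (2*y - 1) * (y - 1) := by
          field_simp; ring
        nlinarith [hy.1, hy.2, inv_pos.mpr hy0]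
    have hf1 : f 1 = 0 := by simp [hf]
    have := hanti ⟨hhalf, hx1⟩ ⟨by linarith, le_rfl⟩ hx1
    simp only [hf, Real.log_one] at this hf1
    linarith
  
private lemma hderivC (x : ℝ) (hx : 0 < x) :
    HasDerivAt (fun y => 1 - y + Real.log y * (2*y - y^2)) ((1 - x) * (1 + 2 * Real.log x)) x := by
  have h1 : HasDerivAt (fun y : ℝ => 1 - y) (-1) x := by
    simpa using (hasDerivAt_id x).const_sub 1
  have h2 : HasDerivAt (fun y : ℝ => 2*y - y^2) (2 - 2*x) x := by
    have := ((hasDerivAt_id x).const_mul 2).sub (hasDerivAt_pow 2 x)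
    exact this.congr_deriv (by norm_num)
  have h3 := (Real.hasDerivAt_log hx.ne').mul h2
  have := h1.add h3
  refine this.congr_deriv ?_
  have : x⁻¹ * (2*x - x^2) = 2 - x := by field_simp
  rw [this]
  ring

private lemma lemC {x : ℝ} (hx : 0 < x) (hxe : x ≤ Real.exp (-1)) :
    0 ≤ 1 - x + Real.log x * (2*x - x^2) := by
  set f : ℝ → ℝ := fun y => 1 - y + Real.log y * (2*y - y^2) with hf
  have hanti : AntitoneOn f (Icc x (Real.exp (-1))) := by
    apply antitoneOn_of_deriv_nonpos (convex_Icc _ _)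
    · apply ContinuousOn.add (by fun_prop)
      apply ContinuousOn.mul _ (by fun_prop)
      exact Real.continuousOn_log.mono (fun y hy => by
        simp only [mem_compl_iff, mem_singleton_iff]
        exact (lt_of_lt_of_le hx hy.1).ne')
    · intro y hy
      rw [interior_Icc] at hy
      exact (hderivC y (hx.trans hy.1)).differentiableAt.differentiableWithinAt
    · intro y hy
      rw [interior_Icc] at hy
      have hy0 : 0 < y := hx.trans hy.1
      rw [(hderivC y hy0).deriv]
      have hlog : Real.log y ≤ -1 := by
        have := Real.log_le_log hy0 hy.2.le
        rwa [Real.log_exp] at this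
      have hy1 : y < 1 := lt_of_le_of_lt hy.2.le (by
        have := exp_neg_one_lt; linarith)
      nlinarith
  have hfE : 0 ≤ f (Real.exp (-1)) := by
    have hlog : Real.log (Real.exp (-1)) = -1 := Real.log_exp _
    simp only [hf, hlog]
    nlinarith [const_pos]
  have := hanti ⟨le_rfl, hxe⟩ ⟨hxe, le_rfl⟩ hxe
  simp only [hf] at this hfE
  linarith

/-- For every real `x > 0` and every `r` with `1 < r ≤ 2`,
`|log x − x + 1| ≤ |x − 1|^r · max(−log x, 1)`. -/
theorem stmt_3 (x : ℝ) (hx : 0 < x) (r : ℝ) (hr1 : 1 < r) (hr2 : r ≤ 2) :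
    |Real.log x - x + 1| ≤ |x - 1| ^ r * max (-Real.log x) 1 := by
  have hlog_le : Real.log x ≤ x - 1 := Real.log_le_sub_one_of_pos hx
  have hlog_ge : 1 - x⁻¹ ≤ Real.log x := Real.one_sub_inv_le_log_of_pos hx
  have habs : |Real.log x - x + 1| = x - 1 - Real.log x := by
    rw [abs_of_nonpos (by linarith)]; ring
  rw [habs]
  rcases lt_trichotomy x 1 with h1 | h1 | h1
  · -- x < 1
    have hb0 : 0 < 1 - x := by linarith
    have hb1 : 1 - x ≤ 1 := by linarith
    have habs1 : |x - 1| = 1 - x := by rw [abs_of_nonpos (by linarith : x - 1 ≤ 0)]; ring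
    rw [habs1]
    have hpow : (1-x) ^ (2:ℝ) ≤ (1-x) ^ r := Real.rpow_le_rpow_of_exponent_ge hb0 hb1 hr2
    have hpow2 : (1-x) ^ (2:ℝ) = (1-x)^2 := by
      rw [show (2:ℝ) = ((2:ℕ):ℝ) by norm_num, Real.rpow_natCast]
    rw [hpow2] at hpow
    have hmax1 : (1:ℝ) ≤ max (-Real.log x) 1 := le_max_right _ _
    rcases le_total (Real.exp (-1)) x with hE | hE
    · -- max could be either, but -log x ≤ 1 so use (1-x)(2-x) bound with factor 1
      have hkey := lemB hE h1.le
      calc x - 1 - Real.log x ≤ (1-x)^2 * 1 := by nlinarith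
        _ ≤ (1-x) ^ r * max (-Real.log x) 1 := by
            apply mul_le_mul hpow hmax1 (by norm_num)
            positivity
    · -- x ≤ exp(-1), max = -log x ≥ 1
      have hL1 : 1 ≤ -Real.log x := by
        have := Real.log_le_log hx hE
        rw [Real.log_exp] at this
        linarith
      have hmax : max (-Real.log x) 1 = -Real.log x := max_eq_left hL1
      rw [hmax]
      have hkey := lemC hx hE
      calc x - 1 - Real.log x ≤ (1-x)^2 * (-Real.log x) := by nlinarith
        _ ≤ (1-x) ^ r * (-Real.log x) := by
            apply mul_le_mul_of_nonneg_right hpow (by linarith)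
  · -- x = 1
    subst h1
    simp only [Real.log_one, sub_self, neg_zero, zero_sub, neg_add_cancel, abs_zero]
    have : (0:ℝ) ^ r = 0 := Real.zero_rpow (by linarith)
    rw [this, zero_mul]
  · -- x > 1
    have hlogpos : 0 < Real.log x := Real.log_pos h1
    have hmax : max (-Real.log x) 1 = 1 := max_eq_right (by linarith)
    have habs1 : |x - 1| = x - 1 := abs_of_pos (by linarith)
    rw [hmax, habs1, mul_one]
    rcases le_total x 2 with h2 | h2
    · have hb0 : 0 < x - 1 := by linarith
      have hpow : (x-1) ^ (2:ℝ) ≤ (x-1) ^ r := Real.rpow_le_rpow_of_exponent_ge hb0 (by linarith) hr2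
      have hpow2 : (x-1) ^ (2:ℝ) = (x-1)^2 := by
        rw [show (2:ℝ) = ((2:ℕ):ℝ) by norm_num, Real.rpow_natCast]
      rw [hpow2] at hpow
      have hxinv : x⁻¹ * x = 1 := inv_mul_cancel₀ hx.ne'
      calc x - 1 - Real.log x ≤ (x-1)^2 := by nlinarith
        _ ≤ (x-1) ^ r := hpow
    · have hpow : (x-1) ^ (1:ℝ) ≤ (x-1) ^ r := Real.rpow_le_rpow_of_exponent_le (by linarith) hr1.le
      rw [Real.rpow_one] at hpow
      linarith
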